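/- Let n ≥ 1 be an integer and let a, b ∈ ZMod n satisfy 2a ≠ 0 and 2b ≠ 0. Then there is no 4×4 real orthogonal matrix d with det d = −1 that commutes with W(a,b). (That is, the representation W(a,b) is chiral.) -/

import Mathlib

/-- The 2×2 rotation matrix through angle `2πa/n`, for `a : ZMod n`. -/
noncomputable def rotMat (n : ℕ) (a : ZMod n) : Matrix (Fin 2) (Fin 2) ℝ :=
  !![Real.cos (2 * Real.pi * a.val / n), -Real.sin (2 * Real.pi * a.val / n);
     Real.sin (2 * Real.pi * a.val / n),  Real.cos (2 * Real.pi * a.val / n)]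

/-- The 4×4 block-diagonal matrix with blocks `rotMat n a` and `rotMat n b`. -/
noncomputable def Wmat (n : ℕ) (a b : ZMod n) : Matrix (Fin 4) (Fin 4) ℝ :=
  Matrix.reindex finSumFinEquiv finSumFinEquiv
    (Matrix.fromBlocks (rotMat n a) 0 0 (rotMat n b))

lemma cancel_ne {t u : ℝ} (ht : t ≠ 0) (h : t * u = 0) : u = 0 :=
  (mul_eq_zero.mp h).resolve_left ht

lemma sum_sq_eq_zero {u v : ℝ} (h : u^2 + v^2 = 0) : u = 0 ∧ v = 0 := by
  have h2 := (add_eq_zero_iff_of_nonneg (sq_nonneg u) (sq_nonneg v)).mp h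
  exact ⟨sq_eq_zero_iff.mp h2.1, sq_eq_zero_iff.mp h2.2⟩

lemma det_fin_four' (A : Matrix (Fin 4) (Fin 4) ℝ) : A.det =
    A 0 0*A 1 1*A 2 2*A 3 3 - A 0 0*A 1 1*A 2 3*A 3 2 - A 0 0*A 1 2*A 2 1*A 3 3 + A 0 0*A 1 2*A 2 3*A 3 1 + A 0 0*A 1 3*A 2 1*A 3 2 - A 0 0*A 1 3*A 2 2*A 3 1 - A 0 1*A 1 0*A 2 2*A 3 3 + A 0 1*A 1 0*A 2 3*A 3 2 + A 0 1*A 1 2*A 2 0*A 3 3 - A 0 1*A 1 2*A 2 3*A 3 0 - A 0 1*A 1 3*A 2 0*A 3 2 + A 0 1*A 1 3*A 2 2*A 3 0 + A 0 2*A 1 0*A 2 1*A 3 3 - A 0 2*A 1 0*A 2 3*A 3 1 - A 0 2*A 1 1*A 2 0*A 3 3 + A 0 2*A 1 1*A 2 3*A 3 0 + A 0 2*A 1 3*A 2 0*A 3 1 - A 0 2*A 1 3*A 2 1*A 3 0 - A 0 3*A 1 0*A 2 1*A 3 2 + A 0 3*A 1 0*A 2 2*A 3 1 + A 0 3*A 1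 1*A 2 0*A 3 2 - A 0 3*A 1 1*A 2 2*A 3 0 - A 0 3*A 1 2*A 2 0*A 3 1 + A 0 3*A 1 2*A 2 1*A 3 0 := by
  have h3 : (Fin.succ 2 : Fin 4) = 3 := rfl
  have h2 : (Fin.castSucc 2 : Fin 4) = 2 := rfl
  rw [Matrix.det_succ_row_zero]
  simp [Fin.sum_univ_succ, Matrix.det_fin_three, Matrix.submatrix_apply, Fin.succAbove,
    h3, h2]
  ring

set_option maxHeartbeats 1000000 in
lemma key_det (c s c2 s2 : ℝ) (hs : s ≠ 0) (hs2 : s2 ≠ 0)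
    (d : Matrix (Fin 4) (Fin 4) ℝ)
    (h : d * !![c,-s,0,0; s,c,0,0; 0,0,c2,-s2; 0,0,s2,c2]
       = !![c,-s,0,0; s,c,0,0; 0,0,c2,-s2; 0,0,s2,c2] * d) :
    0 ≤ d.det := by
  have e00 := congrFun (congrFun h 0) 0
  have e01 := congrFun (congrFun h 0) 1
  have e02 := congrFun (congrFun h 0) 2
  have e03 := congrFun (congrFun h 0) 3
  have e12 := congrFun (congrFun h 1) 2
  have e13 := congrFun (congrFun h 1) 3
  have e20 := congrFun (congrFun h 2) 0
  have e21 := congrFun (congrFun h 2) 1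
  have e22 := congrFun (congrFun h 2) 2
  have e23 := congrFun (congrFun h 2) 3
  have e30 := congrFun (congrFun h 3) 0
  have e31 := congrFun (congrFun h 3) 1
  simp [Matrix.mul_apply, Fin.sum_univ_four, Matrix.vecHead, Matrix.vecTail]
    at e00 e01 e02 e03 e12 e13 e20 e21 e22 e23 e30 e31
  have hA1 : d 0 1 = -(d 1 0) := by
    have := cancel_ne hs (show s * (d 0 1 + d 1 0) = 0 by linear_combination e00)
    linarith
  have hA2 : d 1 1 = d 0 0 := by
    have := cancel_ne hs (show s * (d 1 1 - d 0 0) = 0 by linear_combination e01)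
    linarith
  have hD1 : d 2 3 = -(d 3 2) := by
    have := cancel_ne hs2 (show s2 * (d 2 3 + d 3 2) = 0 by linear_combination e22)
    linarith
  have hD2 : d 3 3 = d 2 2 := by
    have := cancel_ne hs2 (show s2 * (d 3 3 - d 2 2) = 0 by linear_combination e23)
    linarith
  -- the eight product identities
  have px : ((c2-c)^2+(s2-s)^2) * (d 0 2 + d 1 3) = 0 := by
    linear_combination (c2-c)*e02 + (c2-c)*e13 + (s2-s)*e12 - (s2-s)*e03
  have py : ((c2-c)^2+(s2-s)^2) * (d 1 2 - d 0 3) = 0 := by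
    linear_combination (c2-c)*e12 - (c2-c)*e03 - (s2-s)*e02 - (s2-s)*e13
  have pz : ((c2-c)^2+(s2+s)^2) * (d 0 2 - d 1 3) = 0 := by
    linear_combination (c2-c)*e02 - (c2-c)*e13 - (s2+s)*e12 - (s2+s)*e03
  have pw : ((c2-c)^2+(s2+s)^2) * (d 0 3 + d 1 2) = 0 := by
    linear_combination (c2-c)*e12 + (c2-c)*e03 + (s2+s)*e02 - (s2+s)*e13
  have px' : ((c2-c)^2+(s2-s)^2) * (d 2 0 + d 3 1) = 0 := by
    linear_combination -(c2-c)*e20 - (c2-c)*e31 - (s2-s)*e30 + (s2-s)*e21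
  have py' : ((c2-c)^2+(s2-s)^2) * (d 3 0 - d 2 1) = 0 := by
    linear_combination -(c2-c)*e30 + (c2-c)*e21 + (s2-s)*e20 + (s2-s)*e31
  have pz' : ((c2-c)^2+(s2+s)^2) * (d 2 0 - d 3 1) = 0 := by
    linear_combination -(c2-c)*e20 + (c2-c)*e31 - (s2+s)*e30 - (s2+s)*e21
  have pw' : ((c2-c)^2+(s2+s)^2) * (d 2 1 + d 3 0) = 0 := by
    linear_combination -(c2-c)*e30 - (c2-c)*e21 + (s2+s)*e20 - (s2+s)*e31
  by_cases h1 : c2 = c ∧ s2 = s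
  · obtain ⟨hc, hs'⟩ := h1
    have hne : s + s ≠ 0 := fun h0 => hs (by linarith)
    have hΔ' : (c2-c)^2+(s2+s)^2 ≠ 0 := by
      rw [hc, hs', sub_self]
      simpa using pow_ne_zero 2 hne
    have r1 : d 1 3 = d 0 2 := by have := cancel_ne hΔ' pz; linarith
    have r2 : d 1 2 = -(d 0 3) := by have := cancel_ne hΔ' pw; linarith
    have r3 : d 3 1 = d 2 0 := by have := cancel_ne hΔ' pz'; linarith
    have r4 : d 2 1 = -(d 3 0) := by have := cancel_ne hΔ' pw'; linarith
    have hdet : d.det =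
        (d 0 0 * d 2 2 - d 1 0 * d 3 2 - d 0 2 * d 2 0 - d 0 3 * d 3 0)^2 +
        (d 0 0 * d 3 2 + d 1 0 * d 2 2 - d 0 2 * d 3 0 + d 0 3 * d 2 0)^2 := by
      rw [det_fin_four', hA1, hA2, hD1, hD2, r1, r2, r3, r4]; ring
    rw [hdet]; positivity
  · by_cases h2 : c2 = c ∧ s2 = -s
    · obtain ⟨hc, hs'⟩ := h2
      have hne : -s - s ≠ 0 := fun h0 => hs (by linarith)
      have hΔ : (c2-c)^2+(s2-s)^2 ≠ 0 := by
        rw [hc, hs', sub_self]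
        simpa using pow_ne_zero 2 hne
      have r1 : d 1 3 = -(d 0 2) := by have := cancel_ne hΔ px; linarith
      have r2 : d 1 2 = d 0 3 := by have := cancel_ne hΔ py; linarith
      have r3 : d 3 1 = -(d 2 0) := by have := cancel_ne hΔ px'; linarith
      have r4 : d 2 1 = d 3 0 := by have := cancel_ne hΔ py'; linarith
      have hdet : d.det =
          (d 0 0 * d 2 2 + d 1 0 * d 3 2 - d 0 2 * d 2 0 - d 0 3 * d 3 0)^2 +
          (d 1 0 * d 2 2 - d 0 0 * d 3 2 - d 0 3 * d 2 0 + d 0 2 * d 3 0)^2 := by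
        rw [det_fin_four', hA1, hA2, hD1, hD2, r1, r2, r3, r4]; ring
      rw [hdet]; positivity
    · have hΔ : (c2 - c)^2 + (s2 - s)^2 ≠ 0 := by
        intro h0
        obtain ⟨hu, hv⟩ := sum_sq_eq_zero h0
        exact h1 ⟨by linarith, by linarith⟩
      have hΔ' : (c2 - c)^2 + (s2 + s)^2 ≠ 0 := by
        intro h0
        obtain ⟨hu, hv⟩ := sum_sq_eq_zero h0
        exact h2 ⟨by linarith, by linarith⟩
      have hx := cancel_ne hΔ px
      have hy := cancel_ne hΔ py
      have hz := cancel_ne hΔ' pz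
      have hw := cancel_ne hΔ' pw
      have hx' := cancel_ne hΔ px'
      have hy' := cancel_ne hΔ py'
      have hz' := cancel_ne hΔ' pz'
      have hw' := cancel_ne hΔ' pw'
      have h02 : d 0 2 = 0 := by linarith
      have h13 : d 1 3 = 0 := by linarith
      have h12 : d 1 2 = 0 := by linarith
      have h03 : d 0 3 = 0 := by linarith
      have h20 : d 2 0 = 0 := by linarith
      have h31 : d 3 1 = 0 := by linarith
      have h30 : d 3 0 = 0 := by linarith
      have h21 : d 2 1 = 0 := by linarith
      have hdet : d.det =
          (d 0 0 * d 2 2 - d 1 0 * d 3 2)^2 + (d 0 0 * d 3 2 + d 1 0 * d 2 2)^2 := by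
        rw [det_fin_four', hA1, hA2, hD1, hD2, h02, h03, h12, h13, h20, h21, h30, h31]; ring
      rw [hdet]; positivity

lemma Wmat_eq (n : ℕ) (a b : ZMod n) : Wmat n a b =
    !![Real.cos (2 * Real.pi * a.val / n), -Real.sin (2 * Real.pi * a.val / n), 0, 0;
       Real.sin (2 * Real.pi * a.val / n),  Real.cos (2 * Real.pi * a.val / n), 0, 0;
       0, 0, Real.cos (2 * Real.pi * b.val / n), -Real.sin (2 * Real.pi * b.val / n);
       0, 0, Real.sin (2 * Real.pi * b.val / n),  Real.cos (2 * Real.pi * b.val / n)] := by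
  ext i j
  fin_cases i <;> fin_cases j <;>
    simp [Wmat, rotMat, Matrix.fromBlocks, finSumFinEquiv, Fin.addCases, Matrix.reindex_apply,
      Matrix.submatrix_apply, Equiv.symm, Fin.isValue] <;> rfl

lemma sin_ne_zero (n : ℕ) (hn : 1 ≤ n) (a : ZMod n) (ha : 2 * a ≠ 0) :
    Real.sin (2 * Real.pi * a.val / n) ≠ 0 := by
  haveI : NeZero n := ⟨by omega⟩
  intro h0
  rw [Real.sin_eq_zero_iff] at h0
  obtain ⟨k, hk⟩ := h0
  have hn0 : (n:ℝ) ≠ 0 := by positivity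
  rw [eq_div_iff hn0] at hk
  have h2 : Real.pi * ((k:ℝ) * n) = Real.pi * (2 * a.val) := by linear_combination hk
  have h3 : (k:ℝ) * n = 2 * a.val := mul_left_cancel₀ Real.pi_ne_zero h2
  have hz : (k * n : ℤ) = 2 * (a.val : ℤ) := by exact_mod_cast h3
  have hdvd : n ∣ 2 * a.val := by
    have : (n:ℤ) ∣ 2 * (a.val : ℤ) := ⟨k, by linarith⟩
    exact_mod_cast this
  apply ha
  calc 2 * a = ((2 * a.val : ℕ) : ZMod n) := by
        push_cast [ZMod.natCast_zmod_val]; ring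
    _ = 0 := (ZMod.natCast_eq_zero_iff _ _).mpr hdvd

theorem stmt_12 (n : ℕ) (hn : 1 ≤ n) (a b : ZMod n)
    (ha : 2 * a ≠ 0) (hb : 2 * b ≠ 0) :
    ¬ ∃ d : Matrix (Fin 4) (Fin 4) ℝ, d ∈ Matrix.orthogonalGroup (Fin 4) ℝ ∧
        d.det = -1 ∧ d * Wmat n a b = Wmat n a b * d := by
  rintro ⟨d, -, hdet, hcomm⟩
  rw [Wmat_eq] at hcomm
  have h := key_det _ _ _ _ (sin_ne_zero n hn a ha) (sin_ne_zero n hn b hb) d hcomm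
  rw [hdet] at h
  linarith
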